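/- Let C : ℤ^d × ℤ^d → [0,∞) satisfy (A2) and (A3) with constants κ₁, κ₂, N₀. Then there exist γ ∈ (0,1), Θ₁ > 0 and κ₃ > 0, depending only on κ₁, κ₂, N₀, d and α, such that for all x ∈ ℤ^d and all r > Θ₁, the number of y ∈ ℤ^d with |y−x| ≤ r and C(x,y) ≥ κ₃|x−y|^{−d−α} is at least γ times the number of y ∈ ℤ^d with |y−x| ≤ r. -/

import Mathlib

/-- Euclidean norm of a point of `ℤ^d`. -/
noncomputable def zNorm (d : ℕ) (v : Fin d → ℤ) : ℝ := Real.sqrt (∑ i, ((v i : ℝ))^2)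

lemma zNorm_nonneg (d : ℕ) (v : Fin d → ℤ) : 0 ≤ zNorm d v := Real.sqrt_nonneg _

lemma zNorm_zero (d : ℕ) : zNorm d 0 = 0 := by simp [zNorm]

lemma zNorm_neg (d : ℕ) (v : Fin d → ℤ) : zNorm d (-v) = zNorm d v := by
  unfold zNorm; congr 1; apply Finset.sum_congr rfl; intro i _; simp

lemma zNorm_sub_comm (d : ℕ) (x y : Fin d → ℤ) : zNorm d (x - y) = zNorm d (y - x) := by
  rw [← zNorm_neg d (y - x), neg_sub]

lemma abs_le_zNorm (d : ℕ) (v : Fin d → ℤ) (i : Fin d) : |(v i : ℝ)| ≤ zNorm d v := by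
  rw [← Real.sqrt_sq_eq_abs]
  exact Real.sqrt_le_sqrt (Finset.single_le_sum (fun j _ => sq_nonneg ((v j : ℝ))) (Finset.mem_univ i))

lemma one_le_zNorm (d : ℕ) (v : Fin d → ℤ) (hv : v ≠ 0) : 1 ≤ zNorm d v := by
  obtain ⟨i, hi⟩ := Function.ne_iff.1 hv
  have h0 : v i ≠ 0 := by simpa using hi
  have h1 : (1:ℝ) ≤ |(v i : ℝ)| := by
    have : (1:ℤ) ≤ |v i| := Int.one_le_abs h0
    calc (1:ℝ) = ((1:ℤ):ℝ) := by norm_num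
    _ ≤ ((|v i|:ℤ):ℝ) := by exact_mod_cast this
    _ = |(v i:ℝ)| := by push_cast; ring
  exact le_trans h1 (abs_le_zNorm d v i)

lemma zNorm_le_of_forall (d : ℕ) (v : Fin d → ℤ) (m : ℝ) (hm : 0 ≤ m)
    (h : ∀ i, |(v i : ℝ)| ≤ m) : zNorm d v ≤ Real.sqrt d * m := by
  have hs : ∑ i, ((v i:ℝ))^2 ≤ (d:ℝ) * m^2 := by
    calc ∑ i, ((v i:ℝ))^2 ≤ ∑ _i : Fin d, m^2 :=
          Finset.sum_le_sum (fun i _ => by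
            rw [← sq_abs]; exact pow_le_pow_left₀ (abs_nonneg _) (h i) 2)
    _ = (d:ℝ) * m^2 := by simp [mul_comm]
  calc zNorm d v ≤ Real.sqrt ((d:ℝ) * m^2) := Real.sqrt_le_sqrt hs
  _ = Real.sqrt d * m := by rw [Real.sqrt_mul (by positivity), Real.sqrt_sq hm]

/-- The discrete box of radius `m` around `x`. -/
noncomputable def zBox (d : ℕ) (x : Fin d → ℤ) (m : ℕ) : Finset (Fin d → ℤ) :=
  Fintype.piFinset fun i => Finset.Icc (x i - (m:ℤ)) (x i + (m:ℤ))

lemma mem_zBox_iff {d : ℕ} {x : Fin d → ℤ} {m : ℕ} {y : Fin d → ℤ} :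
    y ∈ zBox d x m ↔ ∀ i, |y i - x i| ≤ (m:ℤ) := by
  simp only [zBox, Fintype.mem_piFinset, Finset.mem_Icc, abs_le]
  constructor <;> intro h i <;> have := h i <;> omega

lemma card_zBox (d : ℕ) (x : Fin d → ℤ) (m : ℕ) : (zBox d x m).card = (2*m+1)^d := by
  rw [zBox, Fintype.card_piFinset]
  have : ∀ i : Fin d, (Finset.Icc (x i - (m:ℤ)) (x i + (m:ℤ))).card = 2*m+1 := by
    intro i; rw [Int.card_Icc]; omega
  simp [this]

lemma int_abs_le_natFloor {n : ℤ} {R : ℝ} (hR : 0 ≤ R) (h : |(n:ℝ)| ≤ R) : |n| ≤ (⌊R⌋₊ : ℤ) := by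
  rw [Int.natCast_floor_eq_floor hR]
  exact Int.le_floor.2 (by rwa [Int.cast_abs])

lemma ball_subset_zBox (d : ℕ) (x : Fin d → ℤ) (R : ℝ) (hR : 0 ≤ R) :
    {y : Fin d → ℤ | zNorm d (y - x) ≤ R} ⊆ ↑(zBox d x ⌊R⌋₊) := by
  intro y hy
  simp only [Set.mem_setOf_eq] at hy
  rw [Finset.mem_coe, mem_zBox_iff]
  intro i
  have h1 : |((y - x) i : ℝ)| ≤ R := le_trans (abs_le_zNorm d (y-x) i) hy
  have := int_abs_le_natFloor hR h1
  simpa using this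

lemma rpow_neg_anti {a b β : ℝ} (ha : 0 < a) (hab : a ≤ b) (hβ : 0 ≤ β) :
    b ^ (-β) ≤ a ^ (-β) := by
  rw [Real.rpow_neg (le_trans ha.le hab), Real.rpow_neg ha.le]
  exact inv_anti₀ (Real.rpow_pos_of_pos ha β) (Real.rpow_le_rpow ha.le hab hβ)

lemma rpow_le_of_rpow_le {a b β : ℝ} (hb : 0 ≤ b) (hβ : 0 < β)
    (h : a ^ β ≤ b ^ β) : a ≤ b := by
  by_contra hc
  push_neg at hc
  exact absurd h (not_le.2 (Real.rpow_lt_rpow hb hc hβ))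

set_option maxHeartbeats 2000000 in
theorem stmt1 (d : ℕ) (hd : 1 ≤ d) (α : ℝ) (hα : α ∈ Set.Ioo (0:ℝ) 2)
    (κ₁ κ₂ : ℝ) (hκ₁ : 0 < κ₁) (hκ₂ : 0 < κ₂) (N₀ : ℕ) :
    -- the constants γ, Θ₁, κ₃ depend only on κ₁, κ₂, N₀, d and α
    ∃ γ ∈ Set.Ioo (0:ℝ) 1, ∃ Θ₁ > (0:ℝ), ∃ κ₃ > (0:ℝ),
      ∀ (C : (Fin d → ℤ) → (Fin d → ℤ) → ℝ),
        (∀ x y, 0 ≤ C x y) →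
        -- (A2)
        (∀ x y, x ≠ y → C x y ≤ κ₁ * zNorm d (x - y) ^ (-((d:ℝ) + α))) →
        -- (A3): chains of length `l x y ≤ N₀` given by `z x y`
        ∀ (l : (Fin d → ℤ) → (Fin d → ℤ) → ℕ)
          (z : (Fin d → ℤ) → (Fin d → ℤ) → ℕ → (Fin d → ℤ)),
          (∀ x y, x ≠ y → l x y ≤ N₀ ∧ z x y 0 = x ∧ z x y (l x y) = y ∧
            ∀ i < l x y,
              κ₂ * zNorm d (x - y) ^ (-((d:ℝ) + α)) ≤ C (z x y i) (z x y (i+1))) →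
          (∀ ζ ξ : Fin d → ℤ,
            {p : (Fin d → ℤ) × (Fin d → ℤ) | p.1 ≠ p.2 ∧
              ∃ k < l p.1 p.2, z p.1 p.2 k = ζ ∧ z p.1 p.2 (k+1) = ξ}.Finite ∧
            {p : (Fin d → ℤ) × (Fin d → ℤ) | p.1 ≠ p.2 ∧
              ∃ k < l p.1 p.2, z p.1 p.2 k = ζ ∧ z p.1 p.2 (k+1) = ξ}.ncard ≤ N₀) →
          -- conclusion
          ∀ (x : Fin d → ℤ) (r : ℝ), Θ₁ < r →
            γ * (({y : Fin d → ℤ | zNorm d (y - x) ≤ r}.ncard : ℝ)) ≤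
              (({y : Fin d → ℤ | zNorm d (y - x) ≤ r ∧
                κ₃ * zNorm d (x - y) ^ (-((d:ℝ) + α)) ≤ C x y}.ncard : ℝ)) := by
  obtain ⟨hα0, hα2⟩ := hα
  have hd1 : (1:ℝ) ≤ (d:ℝ) := by exact_mod_cast hd
  set β : ℝ := (d:ℝ) + α with hβdef
  have hβ : 0 < β := add_pos_of_nonneg_of_pos (Nat.cast_nonneg d) hα0
  set sd : ℝ := Real.sqrt d with hsddef
  have hsd0 : 0 < sd := Real.sqrt_pos.2 (by linarith)
  have hsd1 : 1 ≤ sd := by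
    rw [hsddef, show (1:ℝ) = Real.sqrt 1 by simp]
    exact Real.sqrt_le_sqrt hd1
  set Nn : ℕ := N₀ + 1 with hNdef
  have hN1 : (1:ℝ) ≤ (Nn:ℝ) := by exact_mod_cast Nat.one_le_iff_ne_zero.2 (by omega)
  have hN0 : (0:ℝ) < (Nn:ℝ) := lt_of_lt_of_le one_pos hN1
  set ρ : ℝ := min 1 ((κ₂/κ₁) ^ (1/β)) with hρdef
  have hρ0 : 0 < ρ := lt_min one_pos (Real.rpow_pos_of_pos (div_pos hκ₂ hκ₁) _)
  have hρ1 : ρ ≤ 1 := min_le_left _ _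
  have hρβ : κ₁ * ρ ^ β ≤ κ₂ := by
    have h1 : ρ ^ β ≤ ((κ₂/κ₁) ^ (1/β)) ^ β :=
      Real.rpow_le_rpow hρ0.le (min_le_right _ _) hβ.le
    have h2 : ((κ₂/κ₁) ^ (1/β)) ^ β = κ₂/κ₁ := by
      rw [← Real.rpow_mul (le_of_lt (div_pos hκ₂ hκ₁)), one_div_mul_cancel hβ.ne',
        Real.rpow_one]
    have h3 : κ₁ * ρ ^ β ≤ κ₁ * (κ₂/κ₁) := by
      apply mul_le_mul_of_nonneg_left _ hκ₁.le
      rw [← h2]; exact h1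
    calc κ₁ * ρ ^ β ≤ κ₁ * (κ₂/κ₁) := h3
    _ = κ₂ := by field_simp
  set δ : ℝ := ρ / (3 * sd * (4 * Nn)) with hδdef
  have hδ0 : 0 < δ := div_pos hρ0 (by positivity)
  set κ₃ : ℝ := κ₂ * (δ/ρ) ^ β with hκ₃def
  have hκ₃0 : 0 < κ₃ := mul_pos hκ₂ (Real.rpow_pos_of_pos (div_pos hδ0 hρ0) _)
  set γ : ℝ := (1/(4*(Nn:ℝ))) * (ρ/(3*sd))^d with hγdef
  have hγ0 : 0 < γ := by positivity
  have hγ1 : γ < 1 := by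
    have h1 : (ρ/(3*sd))^d ≤ 1 :=
      pow_le_one₀ (by positivity) (by rw [div_le_one (by positivity)]; nlinarith)
    calc γ ≤ 1/(4*(Nn:ℝ)) * 1 := mul_le_mul_of_nonneg_left h1 (by positivity)
    _ < 1 := by rw [mul_one, div_lt_one (by positivity)]; nlinarith
  refine ⟨γ, ⟨hγ0, hγ1⟩, 2*sd/ρ + 1/δ, by positivity, κ₃, hκ₃0, ?_⟩
  intro C hC0 hA2 l z h3 h4 x r hr
  -- basic bounds on r
  have hrsd : 2*sd/ρ < r := lt_of_le_of_lt (le_add_of_nonneg_right (by positivity)) hr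
  have hrδ : 1/δ < r := lt_of_le_of_lt (le_add_of_nonneg_left (by positivity)) hr
  have hr0 : 0 < r := lt_trans (by positivity) hrδ
  have hδr1 : 1 ≤ δ * r := by
    have h := (div_lt_iff₀ hδ0).1 hrδ
    nlinarith
  set t : ℝ := ρ * r / sd with htdef
  have ht2 : 2 ≤ t := by
    rw [htdef, le_div_iff₀ hsd0]
    have h := (div_lt_iff₀ hρ0).1 hrsd
    nlinarith
  have ht0 : 0 < t := by linarith
  have htr : t ≤ r := by
    rw [htdef, div_le_iff₀ hsd0]
    nlinarith
  have hr1 : 1 ≤ r := by linarith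
  set m₁ : ℕ := ⌊t⌋₊ with hm₁def
  set m₂ : ℕ := ⌊δ*r⌋₊ with hm₂def
  set m₃ : ℕ := ⌊r⌋₊ with hm₃def
  -- the punctured small box A
  set A : Finset (Fin d → ℤ) := (zBox d x m₁).erase x with hAdef
  have hxbox : x ∈ zBox d x m₁ := mem_zBox_iff.2 (fun i => by simp)
  have hAcard : A.card = (2*m₁+1)^d - 1 := by
    rw [hAdef, Finset.card_erase_of_mem hxbox, card_zBox]
  have hAmem : ∀ y ∈ A, y ≠ x ∧ zNorm d (y - x) ≤ ρ * r := by
    intro y hy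
    have hyx := Finset.ne_of_mem_erase hy
    have hyb := Finset.mem_of_mem_erase hy
    refine ⟨hyx, ?_⟩
    have h1 : zNorm d (y - x) ≤ sd * (m₁:ℝ) := by
      apply zNorm_le_of_forall _ _ _ (by positivity)
      intro i
      have h2 := mem_zBox_iff.1 hyb i
      calc |((y-x) i : ℝ)| = ((|y i - x i|:ℤ):ℝ) := by rw [Int.cast_abs]; simp
      _ ≤ (((m₁:ℤ)):ℝ) := by exact_mod_cast h2
      _ = (m₁:ℝ) := by simp
    calc zNorm d (y-x) ≤ sd * (m₁:ℝ) := h1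
    _ ≤ sd * t := mul_le_mul_of_nonneg_left (Nat.floor_le ht0.le) hsd0.le
    _ = ρ * r := by rw [htdef]; field_simp
  -- chains have length at least one
  have hl1 : ∀ y : Fin d → ℤ, x ≠ y → 1 ≤ l x y := by
    intro y hxy
    obtain ⟨_, hz0, hzl, _⟩ := h3 x y hxy
    rcases Nat.eq_zero_or_pos (l x y) with h0 | h1
    · exfalso
      apply hxy
      calc x = z x y 0 := hz0.symm
      _ = z x y (l x y) := by rw [h0]
      _ = y := hzl
    · exact h1
  -- the multiplicity bound on fibers of y ↦ z x y 1
  have hfiber : ∀ (s : Finset (Fin d → ℤ)), (∀ y ∈ s, y ≠ x) → ∀ ξ,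
      (s.filter (fun y => z x y 1 = ξ)).card ≤ N₀ := by
    intro s hs ξ
    obtain ⟨hfin, hcard⟩ := h4 x ξ
    have hsub : (fun y => ((x, y) : (Fin d → ℤ) × (Fin d → ℤ))) ''
        ↑(s.filter (fun y => z x y 1 = ξ)) ⊆
        {p : (Fin d → ℤ) × (Fin d → ℤ) | p.1 ≠ p.2 ∧
          ∃ k < l p.1 p.2, z p.1 p.2 k = x ∧ z p.1 p.2 (k+1) = ξ} := by
      rintro p ⟨y, hy, rfl⟩
      rw [Finset.mem_coe, Finset.mem_filter] at hy
      have hyx : y ≠ x := hs y hy.1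
      have hxy : x ≠ y := Ne.symm hyx
      obtain ⟨_, hz0, _, _⟩ := h3 x y hxy
      exact ⟨hxy, 0, hl1 y hxy, hz0, hy.2⟩
    have hinj : Set.InjOn (fun y => ((x, y) : (Fin d → ℤ) × (Fin d → ℤ)))
        ↑(s.filter (fun y => z x y 1 = ξ)) := by
      intro a _ b _ hab
      exact congrArg Prod.snd hab
    calc (s.filter (fun y => z x y 1 = ξ)).card
        = ((fun y => ((x,y) : (Fin d → ℤ) × (Fin d → ℤ))) ''
            ↑(s.filter (fun y => z x y 1 = ξ))).ncard := by
          rw [Set.ncard_image_of_injOn hinj, Set.ncard_coe_finset]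
      _ ≤ _ := Set.ncard_le_ncard hsub hfin
      _ ≤ N₀ := hcard
  -- the bad set
  set Bad : Finset (Fin d → ℤ) := A.filter (fun y => zNorm d (z x y 1 - x) ≤ δ * r) with hBaddef
  have hBadcard : Bad.card ≤ N₀ * (2*m₂+1)^d := by
    have hsub : Bad ⊆ (zBox d x m₂).biUnion (fun ξ => Bad.filter (fun y => z x y 1 = ξ)) := by
      intro y hy
      rw [Finset.mem_biUnion]
      refine ⟨z x y 1, ?_, Finset.mem_filter.2 ⟨hy, rfl⟩⟩
      rw [mem_zBox_iff]
      intro i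
      have hle : zNorm d (z x y 1 - x) ≤ δ * r := (Finset.mem_filter.1 hy).2
      have h1 : |((z x y 1 - x) i : ℝ)| ≤ δ * r :=
        le_trans (abs_le_zNorm d (z x y 1 - x) i) hle
      have := int_abs_le_natFloor (by positivity) h1
      simpa using this
    calc Bad.card ≤ ((zBox d x m₂).biUnion (fun ξ => Bad.filter (fun y => z x y 1 = ξ))).card :=
          Finset.card_le_card hsub
    _ ≤ ∑ ξ ∈ zBox d x m₂, (Bad.filter (fun y => z x y 1 = ξ)).card := Finset.card_biUnion_le
    _ ≤ ∑ _ξ ∈ zBox d x m₂, N₀ := Finset.sum_le_sum (fun ξ _ =>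
          hfiber Bad (fun y hy => (hAmem y (Finset.mem_of_mem_filter y hy)).1) ξ)
    _ = (2*m₂+1)^d * N₀ := by rw [Finset.sum_const, card_zBox, smul_eq_mul]
    _ = N₀ * (2*m₂+1)^d := mul_comm _ _
  -- the good set
  set G : Finset (Fin d → ℤ) := A \ Bad with hGdef
  have hGsub : ∀ y ∈ G, y ∈ A ∧ ¬ (zNorm d (z x y 1 - x) ≤ δ * r) := by
    intro y hy
    have h1 := Finset.mem_sdiff.1 hy
    exact ⟨h1.1, fun hc => h1.2 (Finset.mem_filter.2 ⟨h1.1, hc⟩)⟩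
  have hGcard : (G.card : ℝ) = (A.card : ℝ) - (Bad.card : ℝ) := by
    rw [hGdef, Finset.card_sdiff_of_subset (Finset.filter_subset _ _),
      Nat.cast_sub (Finset.card_le_card (Finset.filter_subset _ _))]
  have himg : G.card ≤ Nn * (G.image (fun y => z x y 1)).card := by
    apply Finset.card_le_mul_card_image
    intro a _
    exact le_trans (hfiber G (fun y hy => (hAmem y (Finset.mem_sdiff.1 hy).1).1) a) (by omega)
  -- the target set
  set T : Set (Fin d → ℤ) := {y : Fin d → ℤ | zNorm d (y - x) ≤ r ∧
      κ₃ * zNorm d (x - y) ^ (-β) ≤ C x y} with hTdef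
  have hTsub : ↑(G.image (fun y => z x y 1)) ⊆ T := by
    intro ξ hξ
    rw [Finset.coe_image] at hξ
    obtain ⟨y, hyG, rfl⟩ := hξ
    obtain ⟨hyA, hnb⟩ := hGsub y (Finset.mem_coe.1 hyG)
    push_neg at hnb
    obtain ⟨hyx, hyρ⟩ := hAmem y hyA
    have hxy : x ≠ y := Ne.symm hyx
    obtain ⟨hlN, hz0, hzl, hch⟩ := h3 x y hxy
    have hCedge : κ₂ * zNorm d (x - y) ^ (-β) ≤ C x (z x y 1) := by
      have h := hch 0 (hl1 y hxy)
      rwa [hz0] at h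
    have hδr0 : (0:ℝ) < δ * r := by positivity
    have hw0 : 0 < zNorm d (z x y 1 - x) := lt_trans hδr0 hnb
    have hz1x : z x y 1 ≠ x := by
      intro hc
      rw [hc, sub_self, zNorm_zero] at hnb
      linarith
    have ha1 : (1:ℝ) ≤ zNorm d (x - y) := one_le_zNorm d (x-y) (sub_ne_zero.2 hxy)
    have ha0 : (0:ℝ) < zNorm d (x - y) := lt_of_lt_of_le one_pos ha1
    have haρ : zNorm d (x - y) ≤ ρ * r := by rw [zNorm_sub_comm]; exact hyρ
    have hA2' : C x (z x y 1) ≤ κ₁ * zNorm d (z x y 1 - x) ^ (-β) := by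
      have h := hA2 x (z x y 1) (Ne.symm hz1x)
      rwa [zNorm_sub_comm] at h
    -- step (i): the endpoint is within distance r
    have hwle : zNorm d (z x y 1 - x) ≤ r := by
      have h1 : κ₂ * zNorm d (x - y) ^ (-β) ≤ κ₁ * zNorm d (z x y 1 - x) ^ (-β) :=
        le_trans hCedge hA2'
      have haβ : (0:ℝ) < zNorm d (x - y) ^ β := Real.rpow_pos_of_pos ha0 β
      have hwβ : (0:ℝ) < zNorm d (z x y 1 - x) ^ β := Real.rpow_pos_of_pos hw0 β
      rw [Real.rpow_neg ha0.le, Real.rpow_neg hw0.le] at h1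
      have h2 : κ₂ * zNorm d (z x y 1 - x) ^ β ≤ κ₁ * zNorm d (x - y) ^ β := by
        have h3' := mul_le_mul_of_nonneg_right h1
          (le_of_lt (mul_pos haβ hwβ))
        have e1 : κ₂ * (zNorm d (x - y) ^ β)⁻¹ *
            (zNorm d (x - y) ^ β * zNorm d (z x y 1 - x) ^ β)
            = κ₂ * zNorm d (z x y 1 - x) ^ β := by
          field_simp
        have e2 : κ₁ * (zNorm d (z x y 1 - x) ^ β)⁻¹ *
            (zNorm d (x - y) ^ β * zNorm d (z x y 1 - x) ^ β)
            = κ₁ * zNorm d (x - y) ^ β := by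
          field_simp
        rw [e1, e2] at h3'
        exact h3'
      have h4' : κ₁ * zNorm d (x - y) ^ β ≤ κ₂ * r ^ β := by
        calc κ₁ * zNorm d (x - y) ^ β ≤ κ₁ * (ρ * r) ^ β :=
              mul_le_mul_of_nonneg_left (Real.rpow_le_rpow ha0.le haρ hβ.le) hκ₁.le
        _ = κ₁ * (ρ ^ β * r ^ β) := by rw [Real.mul_rpow hρ0.le hr0.le]
        _ = (κ₁ * ρ ^ β) * r ^ β := by ring
        _ ≤ κ₂ * r ^ β := mul_le_mul_of_nonneg_right hρβ (Real.rpow_nonneg hr0.le β)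
      have h5 : zNorm d (z x y 1 - x) ^ β ≤ r ^ β :=
        le_of_mul_le_mul_left (le_trans h2 h4') hκ₂
      exact rpow_le_of_rpow_le hr0.le hβ h5
    -- step (ii): the conductance lower bound
    have hkey : (δ/ρ) ^ β * (δ*r) ^ (-β) = (ρ*r) ^ (-β) := by
      rw [Real.rpow_neg hδr0.le, Real.rpow_neg (by positivity : (0:ℝ) ≤ ρ*r),
        ← Real.inv_rpow hδr0.le, ← Real.inv_rpow (by positivity : (0:ℝ) ≤ ρ*r),
        ← Real.mul_rpow (by positivity) (by positivity)]
      congr 1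
      field_simp
    have hCge : κ₃ * zNorm d (z x y 1 - x) ^ (-β) ≤ C x (z x y 1) := by
      calc κ₃ * zNorm d (z x y 1 - x) ^ (-β)
          = κ₂ * ((δ/ρ) ^ β * zNorm d (z x y 1 - x) ^ (-β)) := by rw [hκ₃def]; ring
      _ ≤ κ₂ * ((δ/ρ) ^ β * (δ*r) ^ (-β)) := by
          apply mul_le_mul_of_nonneg_left _ hκ₂.le
          exact mul_le_mul_of_nonneg_left (rpow_neg_anti hδr0 hnb.le hβ.le)
            (Real.rpow_nonneg (by positivity) β)
      _ = κ₂ * (ρ*r) ^ (-β) := by rw [hkey]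
      _ ≤ κ₂ * zNorm d (x - y) ^ (-β) := by
          apply mul_le_mul_of_nonneg_left _ hκ₂.le
          exact rpow_neg_anti ha0 haρ hβ.le
      _ ≤ C x (z x y 1) := hCedge
    rw [hTdef]
    refine ⟨hwle, ?_⟩
    rwa [zNorm_sub_comm d x (z x y 1)]
  -- finiteness of the relevant sets
  have hTfin : T.Finite := by
    apply Set.Finite.subset (zBox d x m₃).finite_toSet
    intro y hy
    exact ball_subset_zBox d x r hr0.le hy.1
  have hTimg : (G.image (fun y => z x y 1)).card ≤ T.ncard := by
    calc (G.image (fun y => z x y 1)).card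
        = (↑(G.image (fun y => z x y 1)) : Set (Fin d → ℤ)).ncard :=
          (Set.ncard_coe_finset _).symm
    _ ≤ T.ncard := Set.ncard_le_ncard hTsub hTfin
  -- counting the big ball
  have hBcount : (({y : Fin d → ℤ | zNorm d (y - x) ≤ r}.ncard : ℝ)) ≤ (3*r)^d := by
    have h1 : {y : Fin d → ℤ | zNorm d (y - x) ≤ r}.ncard ≤ (zBox d x m₃).card := by
      rw [← Set.ncard_coe_finset (zBox d x m₃)]
      exact Set.ncard_le_ncard (ball_subset_zBox d x r hr0.le) (zBox d x m₃).finite_toSet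
    rw [card_zBox] at h1
    have h2 : ((2*m₃+1 : ℕ):ℝ) ≤ 3*r := by
      push_cast
      have h3 := Nat.floor_le hr0.le
      rw [← hm₃def] at h3
      linarith
    calc (({y : Fin d → ℤ | zNorm d (y - x) ≤ r}.ncard : ℝ))
        ≤ (((2*m₃+1)^d : ℕ) : ℝ) := by exact_mod_cast h1
    _ = ((2*m₃+1:ℕ):ℝ)^d := by push_cast; ring
    _ ≤ (3*r)^d := pow_le_pow_left₀ (by positivity) h2 d
  -- counting A from below
  have hAlow : t^d - 1 ≤ (A.card : ℝ) := by
    have h1 : t ≤ ((2*m₁+1 : ℕ):ℝ) := by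
      push_cast
      have h2 := Nat.lt_floor_add_one t
      rw [← hm₁def] at h2
      linarith
    have h2 : t^d ≤ ((2*m₁+1:ℕ):ℝ)^d := pow_le_pow_left₀ ht0.le h1 d
    rw [hAcard]
    have h3 : 1 ≤ (2*m₁+1)^d := Nat.one_le_pow _ _ (by omega)
    rw [Nat.cast_sub h3]
    push_cast at h2 ⊢
    linarith
  -- counting Bad from above
  have hBadup : (Bad.card : ℝ) ≤ (1/4) * t^d := by
    have h1 : (Bad.card:ℝ) ≤ (N₀:ℝ) * ((2*m₂+1:ℕ):ℝ)^d := by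
      calc (Bad.card:ℝ) ≤ ((N₀ * (2*m₂+1)^d : ℕ):ℝ) := by exact_mod_cast hBadcard
      _ = (N₀:ℝ) * ((2*m₂+1:ℕ):ℝ)^d := by push_cast; ring
    have h2 : ((2*m₂+1:ℕ):ℝ) ≤ 3*(δ*r) := by
      push_cast
      have h3 := Nat.floor_le (le_of_lt (by positivity : (0:ℝ) < δ*r))
      rw [← hm₂def] at h3
      linarith
    have h3 : (N₀:ℝ) * (3*(δ*r))^d ≤ (1/4)*t^d := by
      have e1 : 3*(δ*r) = ρ/(sd*(4*(Nn:ℝ))) * r := by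
        rw [hδdef]; field_simp
      have e2 : (ρ/(sd*(4*(Nn:ℝ))))^d = (ρ/sd)^d / ((4*(Nn:ℝ)))^d := by
        rw [← div_div, div_pow]
      have e3 : t^d = (ρ/sd)^d * r^d := by
        rw [htdef, ← mul_pow, div_mul_eq_mul_div]
      have h4N : 4*(Nn:ℝ) ≤ ((4*(Nn:ℝ)))^d := le_self_pow₀ (by linarith) (by omega)
      have hNle : (N₀:ℝ) ≤ (Nn:ℝ) := by exact_mod_cast Nat.le_succ N₀
      have key : (N₀:ℝ) / ((4*(Nn:ℝ)))^d ≤ 1/4 := by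
        calc (N₀:ℝ)/((4*(Nn:ℝ)))^d ≤ (Nn:ℝ)/(4*(Nn:ℝ)) :=
              div_le_div₀ hN0.le hNle (by positivity) h4N
        _ = 1/4 := by field_simp
      calc (N₀:ℝ) * (3*(δ*r))^d = (N₀:ℝ) * ((ρ/(sd*(4*(Nn:ℝ))))^d * r^d) := by
            rw [e1, mul_pow]
      _ = ((N₀:ℝ)/((4*(Nn:ℝ)))^d) * ((ρ/sd)^d * r^d) := by rw [e2]; ring
      _ ≤ (1/4) * ((ρ/sd)^d * r^d) := mul_le_mul_of_nonneg_right key (by positivity)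
      _ = (1/4)*t^d := by rw [e3]
    calc (Bad.card:ℝ) ≤ (N₀:ℝ) * ((2*m₂+1:ℕ):ℝ)^d := h1
    _ ≤ (N₀:ℝ) * (3*(δ*r))^d :=
          mul_le_mul_of_nonneg_left (pow_le_pow_left₀ (by positivity) h2 d) (Nat.cast_nonneg _)
    _ ≤ (1/4)*t^d := h3
  -- assembling the counts
  have htd2 : 2 ≤ t^d := le_trans ht2 (le_self_pow₀ (by linarith) (by omega))
  have hGlow : (1/4)*t^d ≤ (G.card:ℝ) := by
    rw [hGcard]
    linarith
  have hTlow : (1/(4*(Nn:ℝ))) * t^d ≤ (T.ncard : ℝ) := by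
    have h1 : (G.card:ℝ) ≤ (Nn:ℝ) * (T.ncard:ℝ) := by
      calc (G.card:ℝ) ≤ ((Nn * (G.image (fun y => z x y 1)).card : ℕ):ℝ) := by
            exact_mod_cast himg
      _ = (Nn:ℝ) * ((G.image (fun y => z x y 1)).card:ℝ) := by push_cast; ring
      _ ≤ (Nn:ℝ) * (T.ncard:ℝ) :=
            mul_le_mul_of_nonneg_left (by exact_mod_cast hTimg) hN0.le
    rw [show (1/(4*(Nn:ℝ)))*t^d = ((1/4)*t^d)/(Nn:ℝ) by ring,
      div_le_iff₀ hN0]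
    nlinarith
  have hγB : γ * (({y : Fin d → ℤ | zNorm d (y - x) ≤ r}.ncard : ℝ))
      ≤ (1/(4*(Nn:ℝ))) * t^d := by
    calc γ * (({y : Fin d → ℤ | zNorm d (y - x) ≤ r}.ncard : ℝ))
        ≤ γ * (3*r)^d := mul_le_mul_of_nonneg_left hBcount hγ0.le
    _ = (1/(4*(Nn:ℝ))) * ((ρ/(3*sd))^d * (3*r)^d) := by rw [hγdef]; ring
    _ = (1/(4*(Nn:ℝ))) * t^d := by
        rw [← mul_pow]
        congr 2
        rw [htdef]
        field_simp
  calc γ * (({y : Fin d → ℤ | zNorm d (y - x) ≤ r}.ncard : ℝ))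
      ≤ (1/(4*(Nn:ℝ))) * t^d := hγB
  _ ≤ (T.ncard : ℝ) := hTlow
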